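/- For any k ≥ 1 and any M > 1 there exist L₂, δ₂ > 0 with the following property. If A₁, A₂ : B → B are bounded linear operators and E₁, E₂ ⊂ B are k-dimensional subspaces for which |A_j| ≤ M and |(A_j|_{E_j})^{-1}| ≤ M for j = 1, 2 (where (A_j|_{E_j})^{-1} : A_j(E_j) → E_j is the inverse of the restriction), and |A₁ − A₂| ≤ δ₂ and d_H(E₁, E₂) ≤ δ₂, then | log ( det(A₁|E₁) / det(A₂|E₂) ) | ≤ L₂ ( |A₁ − A₂| + d_H(E₁, E₂) ). -/

import Mathlib

open MeasureTheory Filter Metric Module Submodule Set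

noncomputable section

namespace BY

variable {B B' : Type*}

/-- The unit sphere of a subspace `E`. -/
def subSphere [NormedAddCommGroup B] [NormedSpace ℝ B] (E : Submodule ℝ B) : Set B :=
  {v : B | v ∈ E ∧ ‖v‖ = 1}

/-- `d_H(E, E')`: the Hausdorff distance between the unit spheres of `E` and `E'`. -/
def dH [NormedAddCommGroup B] [NormedSpace ℝ B] (E E' : Submodule ℝ B) : ℝ :=
  Metric.hausdorffDist (subSphere E) (subSphere E')

/-- The supremum of `‖π x‖` over `x ∈ S`, where `π` is the projection onto `E` along `F`. -/
def projNormOn [NormedAddCommGroup B] [NormedSpace ℝ B] (E F : Submodule ℝ B)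
    (h : IsCompl E F) (S : Set B) : ℝ :=
  sSup ((fun x => ‖(E.linearProjOfIsCompl F h x : B)‖) '' S)

/-- `|π_{E⊕F}|`: the operator norm of the projection onto `E` along `F`. -/
def projNorm [NormedAddCommGroup B] [NormedSpace ℝ B] (E F : Submodule ℝ B)
    (h : IsCompl E F) : ℝ :=
  projNormOn E F h (Metric.closedBall 0 1)

/-- `α(E, F) = inf { ‖e - f‖ : e ∈ E, ‖e‖ = 1, f ∈ F }`. -/
def alphaAngle [NormedAddCommGroup B] [NormedSpace ℝ B] (E F : Submodule ℝ B) : ℝ :=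
  sInf {r : ℝ | ∃ e ∈ E, ∃ f ∈ F, ‖e‖ = 1 ∧ r = ‖e - f‖}

/-- `ω_k`: the volume of the Euclidean unit ball in `ℝ^k`. -/
def euclideanBallVol (k : ℕ) : ENNReal :=
  volume (Metric.closedBall (0 : EuclideanSpace ℝ (Fin k)) 1)

/-- `μ` is the induced volume `m_E` on the `k`-dimensional subspace `E`: the (unique) Haar
measure on `E` assigning mass `ω_k` to the unit ball of `E`. -/
def IsInducedVolume [NormedAddCommGroup B] [NormedSpace ℝ B] [MeasurableSpace B]
    (E : Submodule ℝ B) (k : ℕ) (μ : Measure E) : Prop :=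
  Measure.IsAddHaarMeasure μ ∧ μ {v : E | ‖v‖ ≤ 1} = euclideanBallVol k

/-- `det(A|E)`, computed with respect to induced volumes `μE` on `E` and `μF` on a
subspace `F` containing `A(E)`: the ratio `μF(A(B_E)) / μE(B_E)` where `B_E` is
the unit ball of `E`. -/
def detIn [NormedAddCommGroup B] [NormedSpace ℝ B] [NormedAddCommGroup B'] [NormedSpace ℝ B']
    [MeasurableSpace B] [MeasurableSpace B']
    (A : B →L[ℝ] B') (E : Submodule ℝ B) (F : Submodule ℝ B')
    (μE : Measure E) (μF : Measure F) : ℝ :=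
  (μF {w : F | ∃ v : B, v ∈ E ∧ ‖v‖ ≤ 1 ∧ A v = (w : B')}).toReal /
    (μE {v : E | ‖v‖ ≤ 1}).toReal

/-- `P[v₁, …, v_k]`: the parallelepiped spanned by the vectors `v i`. -/
def pped [AddCommGroup B] [Module ℝ B] {k : ℕ} (v : Fin k → B) : Set B :=
  {x : B | ∃ a : Fin k → ℝ, (∀ i, a i ∈ Set.Icc (0 : ℝ) 1) ∧ x = ∑ i, a i • v i}

/-- `N[v₁, …, v_k]`: the sum of the norms of the projections, within the span of the `v i`,
onto each `⟨v i⟩` along the span of the other basis vectors. -/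
def Nquan [NormedAddCommGroup B] [NormedSpace ℝ B] {k : ℕ} (v : Fin k → B) : ℝ :=
  ∑ i, sSup {r : ℝ | ∃ a : Fin k → ℝ, ‖∑ j, a j • v j‖ ≤ 1 ∧ r = ‖a i • v i‖}

/-- The operator norm of the restriction of `A` to the subspace `E`. -/
def opNormOnSub [NormedAddCommGroup B] [NormedSpace ℝ B] [NormedAddCommGroup B']
    [NormedSpace ℝ B'] (A : B →L[ℝ] B') (E : Submodule ℝ B) : ℝ :=
  sSup {r : ℝ | ∃ v ∈ E, ‖v‖ ≤ 1 ∧ r = ‖A v‖}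

/-- The `n`-th iterate (`n ∈ ℤ`) of the invertible pair `(f, g)`, `g = f⁻¹`. -/
def zIter {X : Type*} (f g : X → X) (n : ℤ) (x : X) : X :=
  if 0 ≤ n then f^[n.toNat] x else g^[(-n).toNat] x

/-- `ψ'(x) = sup_{n ∈ ℤ} e^{-|n| δ} ψ(f^n x)`. -/
def psiSup {X : Type*} (f g : X → X) (ψ : X → ℝ) (δ : ℝ) (x : X) : ℝ :=
  sSup (Set.range fun n : ℤ => Real.exp (-|(n : ℝ)| * δ) * ψ (zIter f g n x))

/-- The cocycle `T^n_x = T_{f^{n-1} x} ∘ ⋯ ∘ T_x`. -/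
def cocycle {X : Type*} [NormedAddCommGroup B] [NormedSpace ℝ B]
    (f : X → X) (T : X → B →L[ℝ] B) : ℕ → X → B →L[ℝ] B
  | 0, _ => ContinuousLinearMap.id ℝ B
  | n + 1, x => (cocycle f T n (f x)).comp (T x)

end BY

end

namespace S10aux

open MeasureTheory Metric Module Set ENNReal Pointwise


variable {V : Type*} [NormedAddCommGroup V] [NormedSpace ℝ V] [FiniteDimensional ℝ V]

/-- Auerbach basis: a normalized basis with dual functionals of norm at most 1. -/
lemma auerbach :
    ∃ (e : Fin (finrank ℝ V) → V) (φ : Fin (finrank ℝ V) → V →ₗ[ℝ] ℝ),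
      (∀ i, ‖e i‖ ≤ 1) ∧ (∀ i x, |φ i x| ≤ ‖x‖) ∧ (∀ x, ∑ i, φ i x • e i = x) := by
  classical
  set k := finrank ℝ V with hk
  rcases Nat.eq_zero_or_pos k with hk0 | hkpos
  · haveI : Subsingleton V := finrank_zero_iff.mp (hk ▸ hk0)
    refine ⟨fun _ => 0, fun _ => 0, fun i => by simp, fun i x => by simp, fun x => ?_⟩
    exact Subsingleton.elim _ _
  let b : Basis (Fin k) ℝ V := finBasis ℝ V
  set g : (Fin k → V) → ℝ := fun u => |b.det u| with hg
  have hgcont : Continuous g := by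
    have h1 : Continuous fun u : Fin k → V => b.det u := by
      have heq : (fun u : Fin k → V => b.det u)
          = fun u : Fin k → V => Matrix.det (Matrix.of fun i j => b.coord i (u j)) := by
        funext u
        rw [Basis.det_apply]
        rfl
      rw [heq]
      exact Continuous.matrix_det <| continuous_matrix fun i j =>
        (b.coord i).continuous_of_finiteDimensional.comp (continuous_apply j)
    exact h1.abs
  -- the compact set of unit tuples
  set K : Set (Fin k → V) := Set.pi Set.univ (fun _ => sphere (0 : V) 1) with hK
  have hKc : IsCompact K := isCompact_univ_pi fun _ => isCompact_sphere _ _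
  set u0 : Fin k → V := fun i => ‖b i‖⁻¹ • b i with hu0
  have hu0K : u0 ∈ K := by
    intro i _
    have hb : b i ≠ 0 := b.ne_zero i
    simp [u0, norm_smul, abs_of_nonneg, inv_mul_cancel₀ (norm_ne_zero_iff.mpr hb)]
  obtain ⟨e, heK, hmax⟩ := hKc.exists_isMaxOn ⟨u0, hu0K⟩ hgcont.continuousOn
  have hu0pos : 0 < g u0 := by
    have : b.det u0 = (∏ i, ‖b i‖⁻¹) • b.det b := by
      rw [hu0]
      exact (b.det : MultilinearMap ℝ (fun _ : Fin k => V) ℝ).map_smul_univ _ b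
    rw [hg]
    simp only [this, b.det_self, smul_eq_mul, mul_one]
    have hp : (0:ℝ) < ∏ i, ‖b i‖⁻¹ :=
      Finset.prod_pos fun i _ => inv_pos.mpr (norm_pos_iff.mpr (b.ne_zero i))
    rw [abs_of_pos hp]; exact hp
  have hepos : 0 < g e := lt_of_lt_of_le hu0pos (hmax hu0K)
  have hD : b.det e ≠ 0 := fun h => by simp [hg, h] at hepos
  -- key estimate: |det(update e i x)| ≤ ‖x‖ * |det e|
  have hkey : ∀ (i : Fin k) (x : V), |b.det (Function.update e i x)| ≤ ‖x‖ * |b.det e| := by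
    intro i x
    rcases eq_or_ne x 0 with rfl | hx
    · simp
    · have hnx : (0:ℝ) < ‖x‖ := norm_pos_iff.mpr hx
      have hux : Function.update e i (‖x‖⁻¹ • x) ∈ K := by
        intro j _
        rcases eq_or_ne j i with rfl | hj
        · simp [norm_smul, abs_of_nonneg, inv_mul_cancel₀ hnx.ne']
        · simpa [Function.update_of_ne hj] using heK j (Set.mem_univ j)
      have h1 : g (Function.update e i (‖x‖⁻¹ • x)) ≤ g e := hmax hux
      have h2 : b.det (Function.update e i (‖x‖⁻¹ • x)) = ‖x‖⁻¹ * b.det (Function.update e i x) := by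
        simp
      rw [hg] at h1
      simp only [h2, abs_mul, abs_inv, abs_norm] at h1
      calc |b.det (Function.update e i x)| = ‖x‖ * (‖x‖⁻¹ * |b.det (Function.update e i x)|) := by
            field_simp
        _ ≤ ‖x‖ * |b.det e| := by
            apply mul_le_mul_of_nonneg_left h1 hnx.le
  -- dual functionals
  set D : ℝ := b.det e with hDdef
  set φ : Fin k → V →ₗ[ℝ] ℝ := fun i =>
    D⁻¹ • ((b.det : MultilinearMap ℝ (fun _ : Fin k => V) ℝ).toLinearMap e i) with hφdef
  have hφ : ∀ i x, φ i x = D⁻¹ * b.det (Function.update e i x) := by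
    intro i x
    simp [hφdef, MultilinearMap.toLinearMap]
  have hφ_bound : ∀ i x, |φ i x| ≤ ‖x‖ := by
    intro i x
    rw [hφ, abs_mul, abs_inv]
    have hDpos : 0 < |D| := abs_pos.mpr hD
    calc |D|⁻¹ * |b.det (Function.update e i x)| ≤ |D|⁻¹ * (‖x‖ * |D|) :=
          mul_le_mul_of_nonneg_left (hkey i x) (inv_nonneg.mpr hDpos.le)
      _ = ‖x‖ := by field_simp
  have hφe : ∀ i j, φ i (e j) = if i = j then 1 else 0 := by
    intro i j
    rcases eq_or_ne i j with rfl | hij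
    · rw [hφ, Function.update_eq_self]
      simp [if_pos rfl, ← hDdef, inv_mul_cancel₀ hD]
    · have hz : b.det (Function.update e i (e j)) = 0 := by
        apply b.det.map_eq_zero_of_eq (Function.update e i (e j))
          (?_ : Function.update e i (e j) i = Function.update e i (e j) j) hij
        rw [Function.update_self, Function.update_of_ne (Ne.symm hij)]
      rw [hφ, hz, if_neg hij, mul_zero]
  have hli : LinearIndependent ℝ e := by
    rw [linearIndependent_iff']
    intro s c hsum j hjs
    have h := congrArg (φ j) hsum
    rw [map_sum, map_zero] at h
    have heach : ∀ i ∈ s, φ j (c i • e i) = if j = i then c i else 0 := by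
      intro i _
      rw [_root_.map_smul, smul_eq_mul, hφe j i]
      by_cases hji : j = i <;> simp [hji]
    rw [Finset.sum_congr rfl heach, Finset.sum_ite_eq s j c, if_pos hjs] at h
    exact h
  haveI : Nonempty (Fin k) := ⟨⟨0, hkpos⟩⟩
  let e' : Basis (Fin k) ℝ V := basisOfLinearIndependentOfCardEqFinrank hli (by simp [hk])
  have he' : ⇑e' = e := coe_basisOfLinearIndependentOfCardEqFinrank hli (by simp [hk])
  have hrecon : ∀ x, ∑ i, φ i x • e i = x := by
    intro x
    have hx := e'.sum_repr x
    rw [he'] at hx  -- might fail; handle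
    have hφx : ∀ i, φ i x = e'.repr x i := by
      intro i
      conv_lhs => rw [← hx]
      rw [map_sum]
      have heach : ∀ j ∈ Finset.univ, φ i (e'.repr x j • e j) = if i = j then e'.repr x j else 0 := by
        intro j _
        rw [_root_.map_smul, smul_eq_mul, hφe i j]
        by_cases hij : i = j <;> simp [hij]
      rw [Finset.sum_congr rfl heach, Finset.sum_ite_eq Finset.univ i (e'.repr x),
        if_pos (Finset.mem_univ i)]
    calc ∑ i, φ i x • e i = ∑ i, e'.repr x i • e i := by
          refine Finset.sum_congr rfl fun i _ => ?_
          rw [hφx]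
      _ = x := hx
  refine ⟨e, φ, fun i => ?_, hφ_bound, hrecon⟩
  have := heK i (Set.mem_univ i)
  simp only [mem_sphere_iff_norm, sub_zero] at this
  exact this.le

variable {B : Type*} [NormedAddCommGroup B] [NormedSpace ℝ B]

/-- Auerbach projection: a projection onto a finite-dimensional subspace with norm
bound depending only on the dimension. -/
lemma exists_projection (E : Submodule ℝ B) [FiniteDimensional ℝ E] :
    ∃ P : B →L[ℝ] B, (∀ x, P x ∈ E) ∧ (∀ x ∈ E, P x = x) ∧
      ∀ x : B, ‖P x‖ ≤ (finrank ℝ E) * ‖x‖ := by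
  classical
  obtain ⟨e, φ, he_norm, hφ_bound, hrecon⟩ := auerbach (V := E)
  -- continuous versions of the functionals, with norm ≤ 1
  set φc : Fin (finrank ℝ E) → E →L[ℝ] ℝ := fun i => LinearMap.toContinuousLinearMap (φ i)
    with hφc
  have hφc_norm : ∀ i, ‖φc i‖ ≤ 1 := by
    intro i
    refine ContinuousLinearMap.opNorm_le_bound _ zero_le_one fun x => ?_
    simpa [hφc] using hφ_bound i x
  -- Hahn-Banach extensions
  have hext : ∀ i, ∃ g : B →L[ℝ] ℝ, (∀ x : E, g x = φc i x) ∧ ‖g‖ = ‖φc i‖ := fun i =>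
    exists_extension_norm_eq E (φc i)
  choose g hg hgnorm using hext
  set P : B →L[ℝ] B := ∑ i, (g i).smulRight ((e i : B)) with hP
  have hPapply : ∀ x, P x = ∑ i, g i x • (e i : B) := by
    intro x
    simp [hP, ContinuousLinearMap.sum_apply]
  refine ⟨P, fun x => ?_, fun x hx => ?_, fun x => ?_⟩
  · rw [hPapply]
    exact Submodule.sum_mem E fun i _ => Submodule.smul_mem E _ (e i).2
  · rw [hPapply]
    have : ∀ i, g i x = φ i ⟨x, hx⟩ := by
      intro i
      have := hg i ⟨x, hx⟩
      simpa [hφc] using this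
    calc ∑ i, g i x • (e i : B) = ∑ i, ((φ i ⟨x, hx⟩ • e i : E) : B) := by
          refine Finset.sum_congr rfl fun i _ => ?_
          rw [this i]
          rfl
      _ = ((∑ i, φ i ⟨x, hx⟩ • e i : E) : B) := by
          rw [Submodule.coe_sum]
      _ = x := by rw [hrecon ⟨x, hx⟩]
  · rw [hPapply]
    calc ‖∑ i, g i x • (e i : B)‖ ≤ ∑ i, ‖g i x • (e i : B)‖ := norm_sum_le _ _
      _ ≤ ∑ _i : Fin (finrank ℝ E), ‖x‖ := by
          refine Finset.sum_le_sum fun i _ => ?_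
          rw [norm_smul]
          have h1 : |g i x| ≤ ‖x‖ := by
            calc |g i x| ≤ ‖g i‖ * ‖x‖ := (g i).le_opNorm x
              _ ≤ 1 * ‖x‖ := by
                  apply mul_le_mul_of_nonneg_right _ (norm_nonneg x)
                  rw [hgnorm i]; exact hφc_norm i
              _ = ‖x‖ := one_mul _
          have h2 : ‖(e i : B)‖ ≤ 1 := he_norm i
          calc ‖g i x‖ * ‖(e i : B)‖ ≤ ‖x‖ * 1 :=
              mul_le_mul h1 h2 (norm_nonneg _) (norm_nonneg x)
            _ = ‖x‖ := mul_one _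
      _ = (finrank ℝ E) * ‖x‖ := by
          rw [Finset.sum_const, Finset.card_univ, Fintype.card_fin, nsmul_eq_mul]


lemma unitBall_eq (F : Submodule ℝ B) : {v : F | ‖v‖ ≤ 1} = closedBall (0 : F) 1 := by
  ext v; simp [mem_closedBall_zero_iff]

section Meas

lemma euclideanBallVol_pos (k : ℕ) : 0 < BY.euclideanBallVol k :=
  lt_of_lt_of_le (measure_ball_pos volume (0 : EuclideanSpace ℝ (Fin k)) one_pos)
    (measure_mono ball_subset_closedBall)

lemma euclideanBallVol_ne_top (k : ℕ) : BY.euclideanBallVol k ≠ ⊤ :=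
  measure_closedBall_lt_top.ne

variable [MeasurableSpace B] [BorelSpace B]

lemma inducedVolume_closedBall {k : ℕ} {F : Submodule ℝ B} [FiniteDimensional ℝ F]
    (hF : finrank ℝ F = k) {ν : Measure F} (hν : BY.IsInducedVolume F k ν)
    {r : ℝ} (hr : 0 ≤ r) :
    ν (closedBall 0 r) = ENNReal.ofReal (r ^ k) * BY.euclideanBallVol k := by
  haveI := hν.1
  rw [Measure.addHaar_closedBall' ν 0 hr, hF]
  congr 1
  rw [← unitBall_eq F]
  exact hν.2

/-- Comparison of induced volumes on two `k`-dimensional subspaces through a linear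
equivalence whose inverse has norm at most `s`. -/
lemma measure_le_comp {k : ℕ} {F₁ F₂ : Submodule ℝ B}
    [FiniteDimensional ℝ F₁] [FiniteDimensional ℝ F₂]
    (hF₂ : finrank ℝ F₂ = k)
    {ν₁ : Measure F₁} {ν₂ : Measure F₂}
    (h₁ : BY.IsInducedVolume F₁ k ν₁) (h₂ : BY.IsInducedVolume F₂ k ν₂)
    (T : F₂ ≃L[ℝ] F₁) {s : ℝ} (hs : 0 ≤ s)
    (hsymm : ∀ w : F₁, ‖T.symm w‖ ≤ s * ‖w‖)
    {S : Set F₂} (hS : MeasurableSet S) :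
    ν₂ S ≤ ENNReal.ofReal (s ^ k) * ν₁ (T '' S) := by
  haveI := h₁.1; haveI := h₂.1
  set μ' := Measure.map T ν₂ with hμ'
  haveI : μ'.IsAddHaarMeasure := T.isAddHaarMeasure_map ν₂
  have huniq : μ' = μ'.addHaarScalarFactor ν₁ • ν₁ :=
    Measure.isAddLeftInvariant_eq_smul μ' ν₁
  set c := μ'.addHaarScalarFactor ν₁ with hcdef
  have hball1 : ν₁ (closedBall 0 1) = BY.euclideanBallVol k := by
    rw [← unitBall_eq F₁]; exact h₁.2
  have hcle : (c : ℝ≥0∞) ≤ ENNReal.ofReal (s ^ k) := by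
    have h1 : μ' (closedBall 0 1) = ν₂ (T ⁻¹' closedBall 0 1) :=
      Measure.map_apply T.continuous.measurable measurableSet_closedBall
    have h2 : T ⁻¹' closedBall (0 : F₁) 1 ⊆ closedBall (0 : F₂) s := by
      intro w hw
      rw [Set.mem_preimage, mem_closedBall_zero_iff] at hw
      rw [mem_closedBall_zero_iff]
      calc ‖w‖ = ‖T.symm (T w)‖ := by rw [T.symm_apply_apply]
        _ ≤ s * ‖T w‖ := hsymm _
        _ ≤ s * 1 := mul_le_mul_of_nonneg_left hw hs
        _ = s := mul_one s
    have h3 : ν₂ (closedBall 0 s) = ENNReal.ofReal (s ^ k) * BY.euclideanBallVol k :=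
      inducedVolume_closedBall hF₂ h₂ hs
    have h4 : (c : ℝ≥0∞) * BY.euclideanBallVol k
        ≤ ENNReal.ofReal (s ^ k) * BY.euclideanBallVol k := by
      calc (c : ℝ≥0∞) * BY.euclideanBallVol k = μ' (closedBall 0 1) := by
            rw [huniq, Measure.smul_apply, hball1, ENNReal.smul_def, smul_eq_mul]
        _ = ν₂ (T ⁻¹' closedBall 0 1) := h1
        _ ≤ ν₂ (closedBall 0 s) := measure_mono h2
        _ = _ := h3
    exact (ENNReal.mul_le_mul_iff_left (euclideanBallVol_pos k).ne'
      (euclideanBallVol_ne_top k)).mp h4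
  have hTSm : MeasurableSet (T '' S) :=
    (T.toHomeomorph.toMeasurableEquiv).measurableSet_image.mpr hS
  calc ν₂ S = μ' (T '' S) := by
        rw [Measure.map_apply T.continuous.measurable hTSm,
          Set.preimage_image_eq S T.injective]
    _ = (c : ℝ≥0∞) * ν₁ (T '' S) := by rw [huniq, Measure.smul_apply, ENNReal.smul_def, smul_eq_mul]
    _ ≤ _ := mul_le_mul_left hcle _

end Meas

/-- The restriction of `A` to `E` as a linear equivalence onto `E.map A`. -/
lemma exists_restrict_equiv (A : B →L[ℝ] B) (E : Submodule ℝ B) [FiniteDimensional ℝ E]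
    {M : ℝ} (hM : 0 < M) (hinv : ∀ v ∈ E, ‖v‖ ≤ M * ‖A v‖) :
    ∃ T : E ≃L[ℝ] (E.map A.toLinearMap), ∀ v : E, (T v : B) = A v := by
  classical
  set f : E →ₗ[ℝ] (E.map A.toLinearMap) :=
    (A.toLinearMap.comp E.subtype).codRestrict _ (fun v => Submodule.mem_map_of_mem v.2)
    with hf
  have hfapp : ∀ v : E, (f v : B) = A v := fun v => rfl
  have hinj : Function.Injective f := by
    intro v w hvw
    have h0 : A ((v : B) - w) = 0 := by
      have : (f v : B) = (f w : B) := by rw [hvw]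
      rw [hfapp, hfapp] at this
      simp [map_sub, this]
    have hsub : ((v : B) - w) ∈ E := E.sub_mem v.2 w.2
    have := hinv _ hsub
    rw [h0, norm_zero, mul_zero] at this
    have : (v : B) - w = 0 := norm_le_zero_iff.mp this
    exact Subtype.ext (sub_eq_zero.mp this)
  have hsurj : Function.Surjective f := by
    rintro ⟨w, hw⟩
    rcases Submodule.mem_map.mp hw with ⟨v, hvE, hAv⟩
    exact ⟨⟨v, hvE⟩, Subtype.ext (by rw [hfapp]; simpa using hAv)⟩
  let e : E ≃ₗ[ℝ] (E.map A.toLinearMap) := LinearEquiv.ofBijective f ⟨hinj, hsurj⟩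
  exact ⟨e.toContinuousLinearEquiv, fun v => rfl⟩

lemma finrank_map_eq (A : B →L[ℝ] B) (E : Submodule ℝ B) [FiniteDimensional ℝ E]
    {M : ℝ} (hM : 0 < M) (hinv : ∀ v ∈ E, ‖v‖ ≤ M * ‖A v‖) :
    finrank ℝ (E.map A.toLinearMap) = finrank ℝ E := by
  obtain ⟨T, hT⟩ := exists_restrict_equiv A E hM hinv
  exact (T.toLinearEquiv.finrank_eq).symm

/-- The image of the unit ball of `E` under `A`, inside `E.map A`. -/
def Kset (A : B →L[ℝ] B) (E : Submodule ℝ B) : Set (E.map A.toLinearMap) :=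
  {w | ∃ v : B, v ∈ E ∧ ‖v‖ ≤ 1 ∧ A v = (w : B)}

lemma isCompact_Kset (A : B →L[ℝ] B) (E : Submodule ℝ B) [FiniteDimensional ℝ E] :
    IsCompact (Kset A E) := by
  classical
  set g : E → (E.map A.toLinearMap) :=
    fun v => ⟨A v, Submodule.mem_map_of_mem v.2⟩ with hg
  have hgc : Continuous g :=
    Continuous.subtype_mk (A.continuous.comp continuous_subtype_val) _
  have : Kset A E = g '' closedBall 0 1 := by
    ext w
    constructor
    · rintro ⟨v, hvE, hv1, hAv⟩
      exact ⟨⟨v, hvE⟩, by simpa [mem_closedBall_zero_iff] using hv1,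
        Subtype.ext (by simpa [hg] using hAv)⟩
    · rintro ⟨v, hv1, rfl⟩
      exact ⟨v, v.2, by simpa [mem_closedBall_zero_iff] using hv1, rfl⟩
  rw [this]
  exact (isCompact_closedBall _ _).image hgc

lemma Kset_subset (A : B →L[ℝ] B) (E : Submodule ℝ B) {M : ℝ} (hA : ‖A‖ ≤ M) :
    Kset A E ⊆ closedBall 0 M := by
  rintro w ⟨v, hvE, hv1, hAv⟩
  rw [mem_closedBall_zero_iff]
  show ‖(w : B)‖ ≤ M
  rw [← hAv]
  calc ‖A v‖ ≤ ‖A‖ * ‖v‖ := A.le_opNorm v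
    _ ≤ M * 1 := mul_le_mul hA hv1 (norm_nonneg v) ((norm_nonneg _).trans hA)
    _ = M := mul_one M

lemma subset_Kset (A : B →L[ℝ] B) (E : Submodule ℝ B) {M : ℝ} (hM : 0 < M)
    (hinv : ∀ v ∈ E, ‖v‖ ≤ M * ‖A v‖) :
    closedBall 0 M⁻¹ ⊆ Kset A E := by
  rintro ⟨w, hw⟩ hmem
  rw [mem_closedBall_zero_iff] at hmem
  rcases Submodule.mem_map.mp hw with ⟨v, hvE, hAv⟩
  refine ⟨v, hvE, ?_, by simpa using hAv⟩
  have h1 : ‖v‖ ≤ M * ‖A v‖ := hinv v hvE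
  have h2 : ‖A v‖ ≤ M⁻¹ := by
    have : ‖(⟨w, hw⟩ : E.map A.toLinearMap)‖ = ‖w‖ := rfl
    rw [show A v = w from by simpa using hAv]
    simpa [this] using hmem
  calc ‖v‖ ≤ M * ‖A v‖ := h1
    _ ≤ M * M⁻¹ := mul_le_mul_of_nonneg_left h2 hM.le
    _ = 1 := mul_inv_cancel₀ hM.ne'

section Meas2
variable [MeasurableSpace B] [BorelSpace B]

lemma Kset_vol_bounds {k : ℕ} (A : B →L[ℝ] B) (E : Submodule ℝ B) [FiniteDimensional ℝ E]
    (hr : finrank ℝ E = k) {M : ℝ} (hM : 1 < M) (hA : ‖A‖ ≤ M)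
    (hinv : ∀ v ∈ E, ‖v‖ ≤ M * ‖A v‖)
    {ν : Measure (E.map A.toLinearMap)} (hν : BY.IsInducedVolume (E.map A.toLinearMap) k ν) :
    ENNReal.ofReal (M⁻¹ ^ k) * BY.euclideanBallVol k ≤ ν (Kset A E) ∧
      ν (Kset A E) ≤ ENNReal.ofReal (M ^ k) * BY.euclideanBallVol k := by
  have hM0 : (0:ℝ) < M := lt_trans one_pos hM
  haveI : FiniteDimensional ℝ (E.map A.toLinearMap) := by infer_instance
  have hrF : finrank ℝ (E.map A.toLinearMap) = k := by
    rw [finrank_map_eq A E hM0 hinv, hr]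
  constructor
  · calc ENNReal.ofReal (M⁻¹ ^ k) * BY.euclideanBallVol k
        = ν (closedBall 0 M⁻¹) := (inducedVolume_closedBall hrF hν (by positivity)).symm
      _ ≤ ν (Kset A E) := measure_mono (subset_Kset A E hM0 hinv)
  · calc ν (Kset A E) ≤ ν (closedBall 0 M) := measure_mono (Kset_subset A E hA)
      _ = ENNReal.ofReal (M ^ k) * BY.euclideanBallVol k :=
        inducedVolume_closedBall hrF hν hM0.le

end Meas2

lemma subSphere_facts (E : Submodule ℝ B) [FiniteDimensional ℝ E] (h : 0 < finrank ℝ E) :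
    (BY.subSphere E).Nonempty ∧ IsCompact (BY.subSphere E) := by
  have himg : BY.subSphere E = ((↑) : E → B) '' sphere (0 : E) 1 := by
    ext v
    constructor
    · rintro ⟨hvE, hvn⟩
      exact ⟨⟨v, hvE⟩, by simpa [mem_sphere_zero_iff_norm] using hvn, rfl⟩
    · rintro ⟨u, hu, rfl⟩
      exact ⟨u.2, by simpa [mem_sphere_zero_iff_norm] using hu⟩
  have hcomp : IsCompact (BY.subSphere E) := by
    rw [himg]; exact (isCompact_sphere _ _).image continuous_subtype_val
  refine ⟨?_, hcomp⟩
  haveI : Nontrivial E := Module.nontrivial_of_finrank_pos h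
  obtain ⟨u, hu⟩ := exists_ne (0 : E)
  have hnu : (0:ℝ) < ‖u‖ := norm_pos_iff.mpr hu
  refine ⟨((‖u‖⁻¹ • u : E) : B), (‖u‖⁻¹ • u : E).2, ?_⟩
  show ‖(‖u‖⁻¹ • u : E)‖ = 1
  rw [norm_smul, Real.norm_eq_abs, abs_of_nonneg (inv_nonneg.mpr hnu.le)]
  exact inv_mul_cancel₀ hnu.ne'

set_option maxHeartbeats 1000000 in
lemma one_sided [MeasurableSpace B] [BorelSpace B]
    {k : ℕ} (hk : 1 ≤ k) {M : ℝ} (hM : 1 < M)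
    (A₁ A₂ : B →L[ℝ] B) (E₁ E₂ : Submodule ℝ B)
    [FiniteDimensional ℝ E₁] [FiniteDimensional ℝ E₂]
    (hr₁ : finrank ℝ E₁ = k) (hr₂ : finrank ℝ E₂ = k)
    (hA₁ : ‖A₁‖ ≤ M) (hA₂ : ‖A₂‖ ≤ M)
    (hinv₁ : ∀ v ∈ E₁, ‖v‖ ≤ M * ‖A₁ v‖) (hinv₂ : ∀ v ∈ E₂, ‖v‖ ≤ M * ‖A₂ v‖)
    {ν₁ : Measure (E₁.map A₁.toLinearMap)} {ν₂ : Measure (E₂.map A₂.toLinearMap)}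
    (hν₁ : BY.IsInducedVolume (E₁.map A₁.toLinearMap) k ν₁)
    (hν₂ : BY.IsInducedVolume (E₂.map A₂.toLinearMap) k ν₂)
    (hsmall : 2*M^2*(k+1) * (‖A₁ - A₂‖ + BY.dH E₁ E₂) ≤ 1/4) :
    ν₂ (Kset A₂ E₂) ≤
      ENNReal.ofReal ((1 + 2*(2*M^2*(k+1) * (‖A₁ - A₂‖ + BY.dH E₁ E₂)))^(2*k)) *
        ν₁ (Kset A₁ E₁) := by
  classical
  have hM0 : (0:ℝ) < M := one_pos.trans hM
  set dA := ‖A₁ - A₂‖ with hdA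
  set dE := BY.dH E₁ E₂ with hdE
  have hdA0 : 0 ≤ dA := norm_nonneg _
  have hdE0 : 0 ≤ dE := Metric.hausdorffDist_nonneg
  set ε := dA + dE with hε
  have hε0 : 0 ≤ ε := add_nonneg hdA0 hdE0
  set η := 2*M^2*((k:ℝ)+1) * ε with hη
  have hη0 : 0 ≤ η := by positivity
  have hη4 : η ≤ 1/4 := by
    calc η = 2*M^2*((k:ℝ)+1) * (dA + dE) := rfl
      _ ≤ 1/4 := hsmall
  -- the projection onto E₁
  obtain ⟨P, hPmem, hPid, hPnorm⟩ := exists_projection E₁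
  rw [hr₁] at hPnorm
  -- P is almost the identity on E₂
  have hPE₂ : ∀ v ∈ E₂, ‖P v - v‖ ≤ ((k:ℝ)+1) * dE * ‖v‖ := by
    intro v hv
    rcases eq_or_ne v 0 with rfl | hv0
    · simp
    · have hnv : 0 < ‖v‖ := norm_pos_iff.mpr hv0
      set vh := ‖v‖⁻¹ • v with hvh
      have hvhE : vh ∈ E₂ := E₂.smul_mem _ hv
      have hvhn : ‖vh‖ = 1 := by
        rw [hvh, norm_smul]
        simp [abs_of_nonneg (inv_nonneg.mpr hnv.le), inv_mul_cancel₀ hnv.ne']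
      have hvhS : vh ∈ BY.subSphere E₂ := ⟨hvhE, hvhn⟩
      obtain ⟨hne₁, hcomp₁⟩ := subSphere_facts E₁ (by rw [hr₁]; omega)
      obtain ⟨hne₂, hcomp₂⟩ := subSphere_facts E₂ (by rw [hr₂]; omega)
      have hbd : EMetric.hausdorffEdist (BY.subSphere E₂) (BY.subSphere E₁) ≠ ⊤ :=
        Metric.hausdorffEdist_ne_top_of_nonempty_of_bounded hne₂ hne₁
          hcomp₂.isBounded hcomp₁.isBounded
      obtain ⟨u, huS, hudist⟩ := hcomp₁.exists_infDist_eq_dist hne₁ vh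
      have h1 : dist vh u ≤ dE := by
        rw [← hudist, hdE]
        have h2 := Metric.infDist_le_hausdorffDist_of_mem hvhS hbd
        rw [BY.dH, Metric.hausdorffDist_comm]
        exact h2
      have hPu : P u = u := hPid u huS.1
      have key : ‖P vh - vh‖ ≤ ((k:ℝ)+1) * dE := by
        have heq : P vh - vh = P (vh - u) - (vh - u) := by
          rw [map_sub, hPu]; abel
        rw [heq]
        calc ‖P (vh - u) - (vh - u)‖ ≤ ‖P (vh - u)‖ + ‖vh - u‖ := norm_sub_le _ _
          _ ≤ (k:ℝ) * ‖vh - u‖ + ‖vh - u‖ := by linarith [hPnorm (vh - u)]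
          _ = ((k:ℝ)+1) * ‖vh - u‖ := by ring
          _ ≤ ((k:ℝ)+1) * dE := by
              rw [show ‖vh - u‖ = dist vh u from (dist_eq_norm _ _).symm]
              apply mul_le_mul_of_nonneg_left h1 (by positivity)
      have hsc : P v - v = ‖v‖ • (P vh - vh) := by
        have hv' : ‖v‖ • vh = v := smul_inv_smul₀ hnv.ne' v
        rw [smul_sub, ← _root_.map_smul, hv']
      rw [hsc, norm_smul, Real.norm_eq_abs, abs_of_nonneg (norm_nonneg v)]
      calc ‖v‖ * ‖P vh - vh‖ ≤ ‖v‖ * (((k:ℝ)+1)*dE) :=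
            mul_le_mul_of_nonneg_left key (norm_nonneg v)
        _ = ((k:ℝ)+1)*dE*‖v‖ := by ring
  have h_kdE : ((k:ℝ)+1) * dE ≤ η := by
    have h1 : dE ≤ ε := le_add_of_nonneg_left hdA0
    have h2 : ((k:ℝ)+1) ≤ 2*M^2*((k:ℝ)+1) := by
      have hM2 : (1:ℝ) ≤ 2*M^2 := by nlinarith
      have h3 := mul_le_mul_of_nonneg_right hM2 (by positivity : (0:ℝ) ≤ (k:ℝ)+1)
      linarith
    calc ((k:ℝ)+1)*dE ≤ (2*M^2*((k:ℝ)+1)) * dE := mul_le_mul_of_nonneg_right h2 hdE0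
      _ ≤ 2*M^2*((k:ℝ)+1) * ε := mul_le_mul_of_nonneg_left h1 (by positivity)
      _ = η := rfl
  -- restriction equivalences
  obtain ⟨AE₁, hAE₁⟩ := exists_restrict_equiv A₁ E₁ hM0 hinv₁
  obtain ⟨AE₂, hAE₂⟩ := exists_restrict_equiv A₂ E₂ hM0 hinv₂
  -- P restricted as an equivalence E₂ ≃ E₁
  set Plin : E₂ →ₗ[ℝ] E₁ :=
    LinearMap.codRestrict E₁ ((P.toLinearMap).comp E₂.subtype) (fun v => hPmem v) with hPlin
  have hPlapp : ∀ v : E₂, (Plin v : B) = P v := fun v => rfl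
  have hker : ∀ v : E₂, Plin v = 0 → v = 0 := by
    intro v hv
    have h0 : P (v : B) = 0 := by
      rw [← hPlapp v, hv]; rfl
    by_contra hne
    have hvne : (v : B) ≠ 0 := fun h => hne (Subtype.ext h)
    have hnv : 0 < ‖(v : B)‖ := norm_pos_iff.mpr hvne
    have h2 := hPE₂ (v : B) v.2
    rw [h0, zero_sub, norm_neg] at h2
    have h3 : ((k:ℝ)+1)*dE*‖(v:B)‖ ≤ η * ‖(v:B)‖ :=
      mul_le_mul_of_nonneg_right h_kdE (norm_nonneg _)
    nlinarith
  have hPinj : Function.Injective Plin := by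
    intro v w hvw
    have h0 : Plin (v - w) = 0 := by rw [map_sub, hvw, sub_self]
    exact sub_eq_zero.mp (hker _ h0)
  have hPsurj : Function.Surjective Plin := by
    rw [← LinearMap.range_eq_top]
    apply Submodule.eq_top_of_finrank_eq
    rw [LinearMap.finrank_range_of_inj hPinj, hr₂, hr₁]
  set Pe := (LinearEquiv.ofBijective Plin ⟨hPinj, hPsurj⟩).toContinuousLinearEquiv with hPe
  have hPeapp : ∀ v : E₂, (Pe v : B) = P v := fun v => rfl
  set T : (E₂.map A₂.toLinearMap) ≃L[ℝ] (E₁.map A₁.toLinearMap) :=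
    (AE₂.symm.trans Pe).trans AE₁ with hT
  have hTapp : ∀ w : E₂.map A₂.toLinearMap,
      (T w : B) = A₁ (P ((AE₂.symm w : E₂) : B)) := by
    intro w
    have h1 : T w = AE₁ (Pe (AE₂.symm w)) := rfl
    rw [h1, hAE₁, hPeapp]
  have hback : ∀ w : E₂.map A₂.toLinearMap,
      (w : B) = A₂ ((AE₂.symm w : E₂) : B) := by
    intro w
    conv_lhs => rw [← AE₂.apply_symm_apply w]
    rw [hAE₂]
  have hvnorm : ∀ w : E₂.map A₂.toLinearMap, ‖((AE₂.symm w : E₂) : B)‖ ≤ M * ‖w‖ := by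
    intro w
    have h1 := hinv₂ _ (AE₂.symm w).2
    rw [← hback w] at h1
    exact h1
  -- T is close to the identity
  have hTnear : ∀ w : E₂.map A₂.toLinearMap, ‖(T w : B) - (w : B)‖ ≤ η * ‖w‖ := by
    intro w
    set v : B := ((AE₂.symm w : E₂) : B) with hv
    have hvE₂ : v ∈ E₂ := (AE₂.symm w).2
    have h1 : (T w : B) - (w : B) = A₁ (P v - v) + (A₁ - A₂) v := by
      rw [hTapp w, hback w]
      simp only [map_sub, ContinuousLinearMap.sub_apply]
      abel
    rw [h1]
    have i1 : ‖A₁ (P v - v)‖ ≤ M * (((k:ℝ)+1)*dE*‖v‖) := by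
      calc ‖A₁ (P v - v)‖ ≤ ‖A₁‖ * ‖P v - v‖ := A₁.le_opNorm _
        _ ≤ M * (((k:ℝ)+1)*dE*‖v‖) :=
            mul_le_mul hA₁ (hPE₂ v hvE₂) (norm_nonneg _) hM0.le
    have i2 : ‖(A₁ - A₂) v‖ ≤ dA * ‖v‖ := (A₁ - A₂).le_opNorm v
    have hcoef : (M*(((k:ℝ)+1)*dE) + dA) * M ≤ η := by
      rw [hη, hε]
      have hkc : (0:ℝ) ≤ (k:ℝ) := Nat.cast_nonneg k
      have hMle : M ≤ 2*M^2*((k:ℝ)+1) := by nlinarith [mul_nonneg (sq_nonneg M) hkc]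
      have hi1 : M * dA ≤ 2*M^2*((k:ℝ)+1) * dA := mul_le_mul_of_nonneg_right hMle hdA0
      have hi2 : M^2*((k:ℝ)+1)*dE ≤ 2*M^2*((k:ℝ)+1)*dE := by
        nlinarith [mul_nonneg (mul_nonneg (sq_nonneg M) (by linarith : (0:ℝ) ≤ (k:ℝ)+1)) hdE0]
      nlinarith [hi1, hi2]
    calc ‖A₁ (P v - v) + (A₁ - A₂) v‖
        ≤ ‖A₁ (P v - v)‖ + ‖(A₁ - A₂) v‖ := norm_add_le _ _
      _ ≤ M * (((k:ℝ)+1)*dE*‖v‖) + dA * ‖v‖ := add_le_add i1 i2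
      _ = (M*(((k:ℝ)+1)*dE) + dA) * ‖v‖ := by ring
      _ ≤ (M*(((k:ℝ)+1)*dE) + dA) * (M * ‖w‖) := by
          apply mul_le_mul_of_nonneg_left (hvnorm w)
          positivity
      _ = ((M*(((k:ℝ)+1)*dE) + dA) * M) * ‖w‖ := by ring
      _ ≤ η * ‖w‖ := mul_le_mul_of_nonneg_right hcoef (norm_nonneg _)
  have hTlow : ∀ w : E₂.map A₂.toLinearMap, (1 - η) * ‖w‖ ≤ ‖T w‖ := by
    intro w
    have h1 := hTnear w
    have h2 : ‖(w : B)‖ - ‖(T w : B)‖ ≤ ‖(T w : B) - (w : B)‖ := by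
      rw [norm_sub_rev]
      exact norm_sub_norm_le _ _
    have h1' : ‖(T w : B) - (w : B)‖ ≤ η * ‖(w : B)‖ := h1
    show (1 - η) * ‖(w : B)‖ ≤ ‖(T w : B)‖
    linarith
  have hsymm : ∀ w : E₁.map A₁.toLinearMap, ‖T.symm w‖ ≤ (1 + 2*η) * ‖w‖ := by
    intro w
    have h1 := hTlow (T.symm w)
    rw [T.apply_symm_apply] at h1
    set a := ‖T.symm w‖ with hadef
    set b := ‖w‖ with hbdef
    have ha0 : 0 ≤ a := norm_nonneg _
    have hb0 : 0 ≤ b := norm_nonneg _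
    nlinarith [h1, mul_le_mul_of_nonneg_left h1 (by linarith : (0:ℝ) ≤ 1 + 2*η),
      mul_nonneg (mul_nonneg hη0 (by linarith : (0:ℝ) ≤ 1 - 2*η)) ha0]
  -- image inclusion
  have himg : T '' (Kset A₂ E₂) ⊆ (1 + η) • (Kset A₁ E₁) := by
    rintro _ ⟨w, ⟨v, hvE, hv1, hAv⟩, rfl⟩
    have hws : AE₂.symm w = ⟨v, hvE⟩ := by
      have h1 : AE₂ ⟨v, hvE⟩ = w := Subtype.ext (by rw [hAE₂]; exact hAv)
      rw [← h1, AE₂.symm_apply_apply]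
    have hTw : (T w : B) = A₁ (P v) := by rw [hTapp w, hws]
    have hPvE : P v ∈ E₁ := hPmem v
    have hPvn : ‖P v‖ ≤ 1 + η := by
      have h1 : ‖P v - v‖ ≤ ((k:ℝ)+1)*dE*‖v‖ := hPE₂ v hvE
      have h2 : ‖P v‖ ≤ ‖v‖ + ‖P v - v‖ := by
        calc ‖P v‖ = ‖v + (P v - v)‖ := by rw [add_sub_cancel]
          _ ≤ ‖v‖ + ‖P v - v‖ := norm_add_le _ _
      have h3 : ((k:ℝ)+1)*dE*‖v‖ ≤ ((k:ℝ)+1)*dE := by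
        have := mul_le_mul_of_nonneg_left hv1 (show (0:ℝ) ≤ ((k:ℝ)+1)*dE by positivity)
        simpa using this
      linarith [h_kdE]
    set r : ℝ := 1 + η with hr
    have hr0 : 0 < r := by positivity
    have hmem : A₁ (r⁻¹ • P v) ∈ E₁.map A₁.toLinearMap :=
      Submodule.mem_map_of_mem (E₁.smul_mem _ hPvE)
    refine Set.mem_smul_set.mpr ⟨⟨A₁ (r⁻¹ • P v), hmem⟩, ⟨r⁻¹ • P v, E₁.smul_mem _ hPvE, ?_, rfl⟩, ?_⟩
    · rw [norm_smul, Real.norm_eq_abs, abs_of_nonneg (inv_nonneg.mpr hr0.le)]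
      calc r⁻¹ * ‖P v‖ ≤ r⁻¹ * r := mul_le_mul_of_nonneg_left hPvn (inv_nonneg.mpr hr0.le)
        _ = 1 := inv_mul_cancel₀ hr0.ne'
    · apply Subtype.ext
      show r • (A₁ (r⁻¹ • P v)) = (T w : B)
      rw [hTw, _root_.map_smul]; rw [smul_smul, mul_inv_cancel₀ hr0.ne', one_smul]
  -- measure comparison
  have hrF₁ : finrank ℝ (E₁.map A₁.toLinearMap) = k := by
    rw [finrank_map_eq A₁ E₁ hM0 hinv₁, hr₁]
  have hrF₂ : finrank ℝ (E₂.map A₂.toLinearMap) = k := by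
    rw [finrank_map_eq A₂ E₂ hM0 hinv₂, hr₂]
  have hK₂m : MeasurableSet (Kset A₂ E₂) := (isCompact_Kset A₂ E₂).measurableSet
  have step1 : ν₂ (Kset A₂ E₂) ≤ ENNReal.ofReal ((1+2*η) ^ k) * ν₁ (T '' Kset A₂ E₂) :=
    measure_le_comp hrF₂ hν₁ hν₂ T (by positivity) hsymm hK₂m
  haveI : ν₁.IsAddHaarMeasure := hν₁.1
  have step2 : ν₁ (T '' Kset A₂ E₂) ≤ ENNReal.ofReal ((1+η) ^ k) * ν₁ (Kset A₁ E₁) := by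
    calc ν₁ (T '' Kset A₂ E₂) ≤ ν₁ ((1+η) • Kset A₁ E₁) := measure_mono himg
      _ = ENNReal.ofReal (|(1+η) ^ (finrank ℝ (E₁.map A₁.toLinearMap))|) * ν₁ (Kset A₁ E₁) :=
          Measure.addHaar_smul ν₁ _ _
      _ = ENNReal.ofReal ((1+η) ^ k) * ν₁ (Kset A₁ E₁) := by
          rw [hrF₁, abs_of_nonneg (by positivity)]
  have hfinal : ν₂ (Kset A₂ E₂) ≤ ENNReal.ofReal ((1+2*η)^(2*k)) * ν₁ (Kset A₁ E₁) := by
    calc ν₂ (Kset A₂ E₂)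
        ≤ ENNReal.ofReal ((1+2*η)^k) * (ENNReal.ofReal ((1+η)^k) * ν₁ (Kset A₁ E₁)) :=
          step1.trans (mul_le_mul_right step2 _)
      _ = ENNReal.ofReal ((1+2*η)^k * (1+η)^k) * ν₁ (Kset A₁ E₁) := by
          rw [ENNReal.ofReal_mul (by positivity), mul_assoc]
      _ ≤ ENNReal.ofReal ((1+2*η)^(2*k)) * ν₁ (Kset A₁ E₁) := by
          apply mul_le_mul_left
          apply ENNReal.ofReal_le_ofReal
          have h1 : (1+η)^k ≤ (1+2*η)^k := pow_le_pow_left₀ (by positivity) (by linarith) k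
          calc (1+2*η)^k * (1+η)^k ≤ (1+2*η)^k * (1+2*η)^k :=
                mul_le_mul_of_nonneg_left h1 (by positivity)
            _ = (1+2*η)^(2*k) := by rw [← pow_add]; ring_nf
  exact hfinal

end S10aux
/-- Proposition 2.13 of the paper. For any `k ≥ 1` and `M > 1` there
exist `L₂, δ₂ > 0` such that: if `A₁, A₂ : B → B` are bounded operators and `E₁, E₂` are
`k`-dimensional subspaces with `|A_j| ≤ M`, `|(A_j|_{E_j})⁻¹| ≤ M` (i.e.
`‖v‖ ≤ M ‖A_j v‖` for `v ∈ E_j`), `|A₁ - A₂| ≤ δ₂`, and `d_H(E₁, E₂) ≤ δ₂`, then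
`|log (det(A₁|E₁) / det(A₂|E₂))| ≤ L₂ (|A₁ - A₂| + d_H(E₁, E₂))`. -/
theorem statement10 {B : Type*} [NormedAddCommGroup B] [NormedSpace ℝ B] [CompleteSpace B]
    [MeasurableSpace B] [BorelSpace B]
    (k : ℕ) (hk : 1 ≤ k) (M : ℝ) (hM : 1 < M) :
    ∃ L₂ > (0 : ℝ), ∃ δ₂ > (0 : ℝ),
      ∀ (A₁ A₂ : B →L[ℝ] B) (E₁ E₂ : Submodule ℝ B)
        [FiniteDimensional ℝ E₁] [FiniteDimensional ℝ E₂],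
        Module.finrank ℝ E₁ = k → Module.finrank ℝ E₂ = k →
        ‖A₁‖ ≤ M → ‖A₂‖ ≤ M →
        (∀ v ∈ E₁, ‖v‖ ≤ M * ‖A₁ v‖) → (∀ v ∈ E₂, ‖v‖ ≤ M * ‖A₂ v‖) →
        ‖A₁ - A₂‖ ≤ δ₂ → BY.dH E₁ E₂ ≤ δ₂ →
        ∀ (μ₁ : MeasureTheory.Measure E₁) (μ₂ : MeasureTheory.Measure E₂)
          (ν₁ : MeasureTheory.Measure (E₁.map A₁.toLinearMap))
          (ν₂ : MeasureTheory.Measure (E₂.map A₂.toLinearMap)),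
          BY.IsInducedVolume E₁ k μ₁ → BY.IsInducedVolume E₂ k μ₂ →
          BY.IsInducedVolume (E₁.map A₁.toLinearMap) k ν₁ →
          BY.IsInducedVolume (E₂.map A₂.toLinearMap) k ν₂ →
          |Real.log (BY.detIn A₁ E₁ (E₁.map A₁.toLinearMap) μ₁ ν₁ /
              BY.detIn A₂ E₂ (E₂.map A₂.toLinearMap) μ₂ ν₂)| ≤
            L₂ * (‖A₁ - A₂‖ + BY.dH E₁ E₂) := by
  classical
  have hM0 : (0:ℝ) < M := lt_trans one_pos hM
  have hk0 : (0:ℝ) < (k:ℝ) := by exact_mod_cast Nat.lt_of_lt_of_le Nat.zero_lt_one hk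
  set C : ℝ := 2*M^2*((k:ℝ)+1) with hC
  have hC0 : 0 < C := by positivity
  refine ⟨8*(k:ℝ)*M^2*((k:ℝ)+1), by positivity, (16*C)⁻¹, by positivity, ?_⟩
  intro A₁ A₂ E₁ E₂ hfd₁ hfd₂ hr₁ hr₂ hA₁ hA₂ hinv₁ hinv₂ hδA hδE μ₁ μ₂ ν₁ ν₂ hμ₁ hμ₂ hν₁ hν₂
  have hdA0 : 0 ≤ ‖A₁ - A₂‖ := norm_nonneg _
  have hdE0 : 0 ≤ BY.dH E₁ E₂ := Metric.hausdorffDist_nonneg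
  set dA := ‖A₁ - A₂‖ with hdA
  set dE := BY.dH E₁ E₂ with hdE
  set ε := dA + dE with hε
  have hε0 : 0 ≤ ε := add_nonneg hdA0 hdE0
  have hsmall : C * ε ≤ 1/4 := by
    have h1 : ε ≤ (16*C)⁻¹ + (16*C)⁻¹ := add_le_add hδA hδE
    calc C * ε ≤ C * ((16*C)⁻¹ + (16*C)⁻¹) := mul_le_mul_of_nonneg_left h1 hC0.le
      _ = 1/8 := by field_simp; ring
      _ ≤ 1/4 := by norm_num
  have hAsymm : ‖A₂ - A₁‖ = dA := by rw [hdA, norm_sub_rev]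
  have hdHsymm : BY.dH E₂ E₁ = dE := by
    rw [hdE]
    exact Metric.hausdorffDist_comm
  have h21 := S10aux.one_sided hk hM A₁ A₂ E₁ E₂ hr₁ hr₂ hA₁ hA₂ hinv₁ hinv₂ hν₁ hν₂ hsmall
  have h12 := S10aux.one_sided hk hM A₂ A₁ E₂ E₁ hr₂ hr₁ hA₂ hA₁ hinv₂ hinv₁ hν₂ hν₁
    (by rw [hAsymm, hdHsymm]; exact hsmall)
  rw [hAsymm, hdHsymm] at h12
  obtain ⟨hlow₁, hup₁⟩ := S10aux.Kset_vol_bounds A₁ E₁ hr₁ hM hA₁ hinv₁ hν₁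
  obtain ⟨hlow₂, hup₂⟩ := S10aux.Kset_vol_bounds A₂ E₂ hr₂ hM hA₂ hinv₂ hν₂
  have hω0 : (0:ENNReal) < BY.euclideanBallVol k := S10aux.euclideanBallVol_pos k
  have hωt : BY.euclideanBallVol k ≠ ⊤ := S10aux.euclideanBallVol_ne_top k
  have hK₁0 : ν₁ (S10aux.Kset A₁ E₁) ≠ 0 := by
    have h0 : (0:ENNReal) < ENNReal.ofReal (M⁻¹^k) * BY.euclideanBallVol k :=
      ENNReal.mul_pos (ENNReal.ofReal_pos.mpr (by positivity)).ne' hω0.ne'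
    exact (lt_of_lt_of_le h0 hlow₁).ne'
  have hK₂0 : ν₂ (S10aux.Kset A₂ E₂) ≠ 0 := by
    have h0 : (0:ENNReal) < ENNReal.ofReal (M⁻¹^k) * BY.euclideanBallVol k :=
      ENNReal.mul_pos (ENNReal.ofReal_pos.mpr (by positivity)).ne' hω0.ne'
    exact (lt_of_lt_of_le h0 hlow₂).ne'
  have hK₁t : ν₁ (S10aux.Kset A₁ E₁) ≠ ⊤ :=
    ne_top_of_le_ne_top (ENNReal.mul_ne_top ENNReal.ofReal_ne_top hωt) hup₁
  have hK₂t : ν₂ (S10aux.Kset A₂ E₂) ≠ ⊤ :=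
    ne_top_of_le_ne_top (ENNReal.mul_ne_top ENNReal.ofReal_ne_top hωt) hup₂
  set t : ℝ := (1 + 2*(C*ε))^(2*k) with ht
  have hCε0 : (0:ℝ) ≤ C*ε := mul_nonneg hC0.le hε0
  have ht0 : (0:ℝ) < t := by positivity
  have hX₂ : (ν₂ (S10aux.Kset A₂ E₂)).toReal ≤ t * (ν₁ (S10aux.Kset A₁ E₁)).toReal := by
    have h1 := ENNReal.toReal_mono (ENNReal.mul_ne_top ENNReal.ofReal_ne_top hK₁t) h21
    rw [ENNReal.toReal_mul, ENNReal.toReal_ofReal (by positivity)] at h1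
    exact h1
  have hX₁ : (ν₁ (S10aux.Kset A₁ E₁)).toReal ≤ t * (ν₂ (S10aux.Kset A₂ E₂)).toReal := by
    have h1 := ENNReal.toReal_mono (ENNReal.mul_ne_top ENNReal.ofReal_ne_top hK₂t) h12
    rw [ENNReal.toReal_mul, ENNReal.toReal_ofReal (by positivity)] at h1
    exact h1
  have hωR0 : (0:ℝ) < (BY.euclideanBallVol k).toReal := ENNReal.toReal_pos hω0.ne' hωt
  have hdet₁ : BY.detIn A₁ E₁ (E₁.map A₁.toLinearMap) μ₁ ν₁
      = (ν₁ (S10aux.Kset A₁ E₁)).toReal / (BY.euclideanBallVol k).toReal := by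
    unfold BY.detIn
    rw [hμ₁.2]
    rfl
  have hdet₂ : BY.detIn A₂ E₂ (E₂.map A₂.toLinearMap) μ₂ ν₂
      = (ν₂ (S10aux.Kset A₂ E₂)).toReal / (BY.euclideanBallVol k).toReal := by
    unfold BY.detIn
    rw [hμ₂.2]
    rfl
  set d₁ := BY.detIn A₁ E₁ (E₁.map A₁.toLinearMap) μ₁ ν₁ with hd₁def
  set d₂ := BY.detIn A₂ E₂ (E₂.map A₂.toLinearMap) μ₂ ν₂ with hd₂def
  have hd₁0 : 0 < d₁ := by
    rw [hdet₁]
    exact div_pos (ENNReal.toReal_pos hK₁0 hK₁t) hωR0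
  have hd₂0 : 0 < d₂ := by
    rw [hdet₂]
    exact div_pos (ENNReal.toReal_pos hK₂0 hK₂t) hωR0
  have hd21 : d₂ ≤ t * d₁ := by
    rw [hdet₁, hdet₂, ← mul_div_assoc]
    exact div_le_div_of_nonneg_right hX₂ hωR0.le
  have hd12 : d₁ ≤ t * d₂ := by
    rw [hdet₁, hdet₂, ← mul_div_assoc]
    exact div_le_div_of_nonneg_right hX₁ hωR0.le
  have hloglet : Real.log t ≤ 2*(k:ℝ)*(2*(C*ε)) := by
    rw [ht, Real.log_pow]
    have h1 : Real.log (1 + 2*(C*ε)) ≤ 2*(C*ε) := by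
      have h2 := Real.log_le_sub_one_of_pos (show (0:ℝ) < 1 + 2*(C*ε) by positivity)
      linarith
    have h3 : ((2*k : ℕ) : ℝ) = 2*(k:ℝ) := by push_cast; ring
    rw [h3]
    exact mul_le_mul_of_nonneg_left h1 (by positivity)
  have hub : Real.log d₁ - Real.log d₂ ≤ Real.log t := by
    have h1 : Real.log d₁ ≤ Real.log (t * d₂) := Real.log_le_log hd₁0 hd12
    rw [Real.log_mul ht0.ne' hd₂0.ne'] at h1
    linarith
  have hlb : Real.log d₂ - Real.log d₁ ≤ Real.log t := by
    have h1 : Real.log d₂ ≤ Real.log (t * d₁) := Real.log_le_log hd₂0 hd21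
    rw [Real.log_mul ht0.ne' hd₁0.ne'] at h1
    linarith
  have habs : |Real.log (d₁ / d₂)| ≤ Real.log t := by
    rw [Real.log_div hd₁0.ne' hd₂0.ne', abs_le]
    constructor <;> linarith
  calc |Real.log (d₁ / d₂)| ≤ Real.log t := habs
    _ ≤ 2*(k:ℝ)*(2*(C*ε)) := hloglet
    _ = 8*(k:ℝ)*M^2*((k:ℝ)+1) * (dA + dE) := by rw [hε, hC]; ring
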